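/- Let G be a connected k-uniform hypergraph on n vertices with average 2-degrees m₁ ≥ m₂ ≥ … ≥ m_n. If ρ(G) = m₁^{1/k} m₂^{1−1/k}, then all vertices of G have the same average 2-degree, i.e., m₁ = m₂ = … = m_n; conversely, if all average 2-degrees are equal, then ρ(G) = m₁ = m₁^{1/k} m₂^{1−1/k}. -/

import Mathlib

/-- The spectral radius of an order-`k` tensor of dimension `n`: the largest modulus of its
(complex) eigenvalues, where `ρ` is an eigenvalue if `T x = ρ x^{[k-1]}` for some `x ≠ 0`. -/
noncomputable def specRad (n k : ℕ) (T : Fin n → (Fin (k-1) → Fin n) → ℝ) : ℝ :=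
  sSup {r : ℝ | ∃ ρ : ℂ, ‖ρ‖ = r ∧ ∃ x : Fin n → ℂ, x ≠ 0 ∧
    ∀ i, (∑ f : Fin (k-1) → Fin n, (T i f : ℂ) * ∏ a, x (f a)) = ρ * x i ^ (k-1)}

/-- A hypergraph on vertex set `Fin n` is a finite set of edges; `hDeg` is the degree of
vertex `i`, the number of edges containing `i`. -/
def hDeg (n : ℕ) (E : Finset (Finset (Fin n))) (i : Fin n) : ℕ :=
  (E.filter (fun e => i ∈ e)).card

/-- The average 2-degree of vertex `i` in a `k`-uniform hypergraph:
`m_i = (Σ_{{i,i₂,…,i_k} ∈ E_i} d_{i₂} ⋯ d_{i_k}) / d_i^{k-1}`. -/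
noncomputable def avg2 (n k : ℕ) (E : Finset (Finset (Fin n))) (i : Fin n) : ℝ :=
  (∑ e ∈ E.filter (fun e => i ∈ e), ∏ j ∈ e.erase i, (hDeg n E j : ℝ)) /
    (hDeg n E i : ℝ) ^ (k-1)

/-- The adjacency tensor of a `k`-uniform hypergraph: entry `1/(k-1)!` at `(i₁,…,i_k)` when
`{i₁,…,i_k}` is an edge, and `0` otherwise. -/
noncomputable def adjT (n k : ℕ) (E : Finset (Finset (Fin n))) :
    Fin n → (Fin (k-1) → Fin n) → ℝ :=
  fun i f => if insert i (Finset.image f Finset.univ) ∈ E then 1 / (k-1).factorial else 0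

/-- The signless Laplacian tensor `Q(G) = D(G) + A(G)`. -/
noncomputable def qT (n k : ℕ) (E : Finset (Finset (Fin n))) :
    Fin n → (Fin (k-1) → Fin n) → ℝ :=
  fun i f => (if ∀ a, f a = i then (hDeg n E i : ℝ) else 0) + adjT n k E i f

/-- A hypergraph is connected if every pair of distinct vertices is joined by a sequence of
pairwise intersecting edges. -/
def HConn (n : ℕ) (E : Finset (Finset (Fin n))) : Prop :=
  ∀ u v : Fin n, u ≠ v → ∃ r : ℕ, ∃ es : Fin (r+1) → Finset (Fin n),
    (∀ s, es s ∈ E) ∧ u ∈ es 0 ∧ v ∈ es (Fin.last r) ∧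
    ∀ s : Fin r, (es s.castSucc ∩ es s.succ).Nonempty


section aux
variable {n k : ℕ} {E : Finset (Finset (Fin n))}

lemma img_inj (s : Finset (Fin n)) (hs : s.card = k - 1)
    (f : Fin (k-1) → Fin n) (hf : Finset.image f Finset.univ = s) :
    Function.Injective f := by
  have h := Finset.injOn_of_card_image_eq (f := f) (s := Finset.univ) (by simp [hf, hs])
  intro a b hab
  exact h (by simp) (by simp) hab

lemma fiber_card (s : Finset (Fin n)) (hs : s.card = k - 1) :
    (Finset.univ.filter (fun f : Fin (k-1) → Fin n =>
      Finset.image f Finset.univ = s)).card = (k-1).factorial := by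
  have hst : Fintype.card {x // x ∈ s} = k - 1 := by simp [hs]
  have hcard : Fintype.card (Fin (k-1) ↪ {x // x ∈ s}) = (k-1).factorial := by
    rw [Fintype.card_embedding_eq, hst, Fintype.card_fin, Nat.descFactorial_self]
  rw [← hcard, ← Finset.card_univ]
  refine Finset.card_bij'
    (i := fun f hf => ⟨fun a => ⟨f a, by
        have : Finset.image f Finset.univ = s := (Finset.mem_filter.mp hf).2
        exact this ▸ Finset.mem_image_of_mem f (Finset.mem_univ a)⟩, by
      intro a b hab
      exact img_inj s hs f (Finset.mem_filter.mp hf).2 (by simpa using congrArg Subtype.val hab)⟩)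
    (j := fun g _ => fun a => (g a : Fin n)) ?_ ?_ ?_ ?_
  · intro f hf; exact Finset.mem_univ _
  · intro g _
    refine Finset.mem_filter.mpr ⟨Finset.mem_univ _, ?_⟩
    apply Finset.eq_of_subset_of_card_le
    · intro x hx
      obtain ⟨a, _, rfl⟩ := Finset.mem_image.mp hx
      exact (g a).2
    · rw [hs, Finset.card_image_of_injective _ (fun a b hab => g.injective (Subtype.ext hab))]
      simp
  · intro f hf; rfl
  · intro g hg; ext a; rfl

end aux


section aux2
variable {n k : ℕ} {E : Finset (Finset (Fin n))}

lemma insert_eq_iff_img (hk : 2 ≤ k) (hcard : ∀ e ∈ E, e.card = k)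
    (f : Fin (k-1) → Fin n) (e : Finset (Fin n)) (he : e ∈ E) (hie : (i : Fin n) ∈ e) :
    insert i (Finset.image f Finset.univ) = e ↔ Finset.image f Finset.univ = e.erase i := by
  constructor
  · intro h
    have hle : (Finset.image f Finset.univ).card ≤ k - 1 :=
      (Finset.card_image_le).trans (by simp)
    have hni : i ∉ Finset.image f Finset.univ := by
      intro hi
      rw [Finset.insert_eq_of_mem hi] at h
      rw [h, hcard e he] at hle
      omega
    ext j
    constructor
    · intro hj
      refine Finset.mem_erase.mpr ⟨?_, h ▸ Finset.mem_insert_of_mem hj⟩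
      rintro rfl; exact hni hj
    · intro hj
      obtain ⟨hji, hje⟩ := Finset.mem_erase.mp hj
      have : j ∈ insert i (Finset.image f Finset.univ) := h ▸ hje
      rcases Finset.mem_insert.mp this with h' | h'
      · exact absurd h' hji
      · exact h'
  · intro h
    rw [h, Finset.insert_erase hie]

lemma key_sum (hk : 2 ≤ k) (hcard : ∀ e ∈ E, e.card = k) (i : Fin n) (x : Fin n → ℂ) :
    ∑ f : Fin (k-1) → Fin n, ((adjT n k E i f : ℝ) : ℂ) * ∏ a, x (f a)
      = ∑ e ∈ E.filter (fun e => i ∈ e), ∏ j ∈ e.erase i, x j := by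
  have hfact : ((k-1).factorial : ℂ) ≠ 0 := by
    exact_mod_cast Nat.cast_ne_zero.mpr (Nat.factorial_ne_zero _)
  calc ∑ f : Fin (k-1) → Fin n, ((adjT n k E i f : ℝ) : ℂ) * ∏ a, x (f a)
      = ∑ f : Fin (k-1) → Fin n, ∑ e ∈ E.filter (fun e => i ∈ e),
          (if Finset.image f Finset.univ = e.erase i
            then (1 / (k-1).factorial : ℂ) * ∏ a, x (f a) else 0) := by
        refine Finset.sum_congr rfl fun f _ => ?_
        have : ∀ e ∈ E.filter (fun e => i ∈ e),
            (if Finset.image f Finset.univ = e.erase i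
              then (1 / (k-1).factorial : ℂ) * ∏ a, x (f a) else 0)
            = (if insert i (Finset.image f Finset.univ) = e
              then (1 / (k-1).factorial : ℂ) * ∏ a, x (f a) else 0) := by
          intro e he
          obtain ⟨heE, hie⟩ := Finset.mem_filter.mp he
          rw [if_congr (insert_eq_iff_img hk hcard f e heE hie).symm rfl rfl]
        rw [Finset.sum_congr rfl this, Finset.sum_ite_eq]
        have hmem : insert i (Finset.image f Finset.univ) ∈ E.filter (fun e => i ∈ e)
            ↔ insert i (Finset.image f Finset.univ) ∈ E := by
          simp [Finset.mem_filter]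
        rw [if_congr hmem rfl rfl]
        simp only [adjT]
        split <;> simp
      _ = ∑ e ∈ E.filter (fun e => i ∈ e), ∑ f : Fin (k-1) → Fin n,
          (if Finset.image f Finset.univ = e.erase i
            then (1 / (k-1).factorial : ℂ) * ∏ a, x (f a) else 0) := Finset.sum_comm
      _ = ∑ e ∈ E.filter (fun e => i ∈ e), ∏ j ∈ e.erase i, x j := by
        refine Finset.sum_congr rfl fun e he => ?_
        obtain ⟨heE, hie⟩ := Finset.mem_filter.mp he
        have hsc : (e.erase i).card = k - 1 := by
          rw [Finset.card_erase_of_mem hie, hcard e heE]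
        rw [← Finset.sum_filter]
        have hconst : ∀ f ∈ Finset.univ.filter (fun f : Fin (k-1) → Fin n =>
            Finset.image f Finset.univ = e.erase i),
            (1 / (k-1).factorial : ℂ) * ∏ a, x (f a)
              = (1 / (k-1).factorial : ℂ) * ∏ j ∈ e.erase i, x j := by
          intro f hf
          have himg := (Finset.mem_filter.mp hf).2
          have hinj := img_inj (e.erase i) hsc f himg
          congr 1
          rw [← himg, Finset.prod_image (fun a _ b _ h => hinj h)]
        rw [Finset.sum_congr rfl hconst, Finset.sum_const, fiber_card _ hsc,
          nsmul_eq_mul]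
        field_simp
end aux2




noncomputable def Nw (n : ℕ) (E : Finset (Finset (Fin n))) (w : Fin n → ℝ) (i : Fin n) : ℝ :=
  ∑ e ∈ E.filter (fun e => i ∈ e), ∏ j ∈ e.erase i, w j

noncomputable def dR (n : ℕ) (E : Finset (Finset (Fin n))) (i : Fin n) : ℝ :=
  (hDeg n E i : ℝ)

section aux3
variable {n k : ℕ} {E : Finset (Finset (Fin n))}

lemma exists_edge (hn : 2 ≤ n) (hconn : HConn n E) (i : Fin n) : ∃ e ∈ E, i ∈ e := by
  have : ∃ j : Fin n, j ≠ i := by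
    rcases eq_or_ne i ⟨0, by omega⟩ with h | h
    · exact ⟨⟨1, by omega⟩, by rw [h]; intro hc; simp [Fin.ext_iff] at hc⟩
    · exact ⟨⟨0, by omega⟩, fun hc => h (hc ▸ rfl) |>.elim⟩
  obtain ⟨j, hj⟩ := this
  obtain ⟨r, es, hes, hu, _, _⟩ := hconn i j (Ne.symm hj)
  exact ⟨es 0, hes 0, hu⟩

lemma deg_pos (hn : 2 ≤ n) (hconn : HConn n E) (i : Fin n) : 0 < hDeg n E i := by
  obtain ⟨e, he, hie⟩ := exists_edge hn hconn i
  exact Finset.card_pos.mpr ⟨e, Finset.mem_filter.mpr ⟨he, hie⟩⟩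

lemma dR_pos (hn : 2 ≤ n) (hconn : HConn n E) (i : Fin n) : 0 < dR n E i := by
  unfold dR; exact_mod_cast deg_pos hn hconn i

lemma Nw_pos (hn : 2 ≤ n) (hconn : HConn n E) {w : Fin n → ℝ} (hw : ∀ j, 0 < w j)
    (i : Fin n) : 0 < Nw n E w i := by
  obtain ⟨e, he, hie⟩ := exists_edge hn hconn i
  refine Finset.sum_pos' (fun e' _ => Finset.prod_nonneg fun j _ => (hw j).le)
    ⟨e, Finset.mem_filter.mpr ⟨he, hie⟩, Finset.prod_pos fun j _ => hw j⟩

lemma avg2_eq (i : Fin n) :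
    avg2 n k E i = Nw n E (dR n E) i / (dR n E i) ^ (k-1) := rfl

lemma Nw_dR_eq (hn : 2 ≤ n) (hconn : HConn n E) (i : Fin n) :
    Nw n E (dR n E) i = avg2 n k E i * (dR n E i) ^ (k-1) := by
  rw [avg2_eq, div_mul_cancel₀]
  exact pow_ne_zero _ (dR_pos hn hconn i).ne'

lemma avg2_pos (hn : 2 ≤ n) (hconn : HConn n E) (i : Fin n) : 0 < avg2 n k E i := by
  rw [avg2_eq]
  exact div_pos (Nw_pos hn hconn (dR_pos hn hconn) i)
    (pow_pos (dR_pos hn hconn i) _)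
end aux3
section gersh
variable {n k : ℕ} {E : Finset (Finset (Fin n))}

lemma gersh (hk : 2 ≤ k) (hn : 2 ≤ n) (hcard : ∀ e ∈ E, e.card = k)
    (hconn : HConn n E) {w : Fin n → ℝ} (hw : ∀ j, 0 < w j) {B : ℝ}
    (hB : ∀ i, Nw n E w i ≤ B * w i ^ (k-1))
    {ρ : ℂ} {x : Fin n → ℂ} (hx : x ≠ 0)
    (heig : ∀ i, (∑ f : Fin (k-1) → Fin n, ((adjT n k E i f : ℝ) : ℂ) * ∏ a, x (f a))
      = ρ * x i ^ (k-1)) :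
    ‖ρ‖ ≤ B ∧
      (‖ρ‖ = B → ∀ i, Nw n E w i = B * w i ^ (k-1)) := by
  have heig' : ∀ i, (∑ e ∈ E.filter (fun e => i ∈ e), ∏ j ∈ e.erase i, x j)
      = ρ * x i ^ (k-1) := fun i => (key_sum hk hcard i x) ▸ heig i
  have hne : (Finset.univ : Finset (Fin n)).Nonempty := ⟨⟨0, by omega⟩, Finset.mem_univ _⟩
  obtain ⟨i₀, -, hmax⟩ := Finset.exists_max_image Finset.univ
    (fun i => ‖x i‖ / w i) hne
  set t : ℝ := ‖x i₀‖ / w i₀ with hts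
  have hxle : ∀ j, ‖x j‖ ≤ t * w j := by
    intro j
    have := hmax j (Finset.mem_univ j)
    rw [div_le_iff₀ (hw j)] at this
    exact this
  have ht : 0 < t := by
    obtain ⟨j, hj⟩ := Function.ne_iff.mp hx
    have h1 : 0 < ‖x j‖ / w j :=
      div_pos (by simpa using hj) (hw j)
    exact h1.trans_le (hmax j (Finset.mem_univ j))
  -- the key estimate at a "maximizer" vertex
  have hchain : ∀ i, ‖x i‖ = t * w i →
      ‖ρ‖ * (t * w i) ^ (k-1)
        ≤ t ^ (k-1) * Nw n E w i ∧
      t ^ (k-1) * Nw n E w i ≤ t ^ (k-1) * (B * w i ^ (k-1)) ∧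
      (‖ρ‖ * (t * w i) ^ (k-1) = t ^ (k-1) * (B * w i ^ (k-1)) →
        (Nw n E w i = B * w i ^ (k-1) ∧
          ∀ e ∈ E.filter (fun e => i ∈ e),
            (∏ j ∈ e.erase i, ‖x j‖) = ∏ j ∈ e.erase i, (t * w j))) := by
    intro i hxi
    have hS1 : ‖ρ‖ * (t * w i) ^ (k-1)
        ≤ ∑ e ∈ E.filter (fun e => i ∈ e), ∏ j ∈ e.erase i, ‖x j‖ := by
      calc ‖ρ‖ * (t * w i) ^ (k-1)
          = ‖ρ * x i ^ (k-1)‖ := by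
            rw [norm_mul, norm_pow, hxi]
        _ = ‖∑ e ∈ E.filter (fun e => i ∈ e), ∏ j ∈ e.erase i, x j‖ := by
            rw [heig' i]
        _ ≤ ∑ e ∈ E.filter (fun e => i ∈ e), ‖∏ j ∈ e.erase i, x j‖ :=
            norm_sum_le _ _
        _ = ∑ e ∈ E.filter (fun e => i ∈ e), ∏ j ∈ e.erase i, ‖x j‖ := by
            exact Finset.sum_congr rfl fun e _ => norm_prod _ _
    have hterm : ∀ e ∈ E.filter (fun e => i ∈ e),
        (∏ j ∈ e.erase i, ‖x j‖) ≤ ∏ j ∈ e.erase i, (t * w j) :=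
      fun e _ => Finset.prod_le_prod (fun j _ => norm_nonneg _)
        (fun j _ => hxle j)
    have hprodconst : ∀ e ∈ E.filter (fun e => i ∈ e),
        (∏ j ∈ e.erase i, (t * w j)) = t ^ (k-1) * ∏ j ∈ e.erase i, w j := by
      intro e he
      obtain ⟨heE, hie⟩ := Finset.mem_filter.mp he
      rw [Finset.prod_mul_distrib, Finset.prod_const,
        Finset.card_erase_of_mem hie, hcard e heE]
    have hS2 : (∑ e ∈ E.filter (fun e => i ∈ e), ∏ j ∈ e.erase i, (t * w j))
        = t ^ (k-1) * Nw n E w i := by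
      rw [Nw, Finset.mul_sum]
      exact Finset.sum_congr rfl hprodconst
    refine ⟨hS1.trans (le_of_le_of_eq (Finset.sum_le_sum hterm) hS2), ?_, ?_⟩
    · exact mul_le_mul_of_nonneg_left (hB i) (pow_nonneg ht.le _)
    · intro heq
      have h5 : (∑ e ∈ E.filter (fun e => i ∈ e), ∏ j ∈ e.erase i, ‖x j‖)
          = ∑ e ∈ E.filter (fun e => i ∈ e), ∏ j ∈ e.erase i, (t * w j) := by
        have hle1 := Finset.sum_le_sum hterm
        have hge : (∑ e ∈ E.filter (fun e => i ∈ e), ∏ j ∈ e.erase i, (t * w j))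
            ≤ ∑ e ∈ E.filter (fun e => i ∈ e), ∏ j ∈ e.erase i, ‖x j‖ := by
          rw [hS2]
          calc t ^ (k-1) * Nw n E w i ≤ t ^ (k-1) * (B * w i ^ (k-1)) :=
                mul_le_mul_of_nonneg_left (hB i) (pow_nonneg ht.le _)
            _ = ‖ρ‖ * (t * w i) ^ (k-1) := heq.symm
            _ ≤ _ := hS1
        exact le_antisymm hle1 hge
      constructor
      · have : t ^ (k-1) * Nw n E w i = t ^ (k-1) * (B * w i ^ (k-1)) := by
          have hup := heq ▸ hS1
          have := le_antisymm (mul_le_mul_of_nonneg_left (hB i) (pow_nonneg ht.le _))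
            (by rw [← hS2, ← h5]; exact hup)
          exact this
        exact mul_left_cancel₀ (pow_ne_zero _ ht.ne') this
      · exact fun e he => (Finset.sum_eq_sum_iff_of_le hterm).mp h5 e he
  -- part 1 : the bound
  have hxi₀ : ‖x i₀‖ = t * w i₀ := by
    rw [hts, div_mul_cancel₀ _ (hw i₀).ne']
  have hbound : ‖ρ‖ ≤ B := by
    obtain ⟨h1, h2, -⟩ := hchain i₀ hxi₀
    have h3 : ‖ρ‖ * (t * w i₀) ^ (k-1) ≤ B * (t * w i₀) ^ (k-1) := by
      calc ‖ρ‖ * (t * w i₀) ^ (k-1) ≤ t ^ (k-1) * (B * w i₀ ^ (k-1)) :=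
            h1.trans h2
        _ = B * (t * w i₀) ^ (k-1) := by ring
    exact le_of_mul_le_mul_right h3 (pow_pos (mul_pos ht (hw i₀)) _)
  refine ⟨hbound, ?_⟩
  intro habs
  -- rigidity
  have hstep : ∀ i, ‖x i‖ = t * w i →
      Nw n E w i = B * w i ^ (k-1) ∧
      ∀ e ∈ E, i ∈ e → ∀ j ∈ e, ‖x j‖ = t * w j := by
    intro i hxi
    obtain ⟨h1, h2, h3⟩ := hchain i hxi
    have heq : ‖ρ‖ * (t * w i) ^ (k-1) = t ^ (k-1) * (B * w i ^ (k-1)) := by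
      rw [habs]; ring
    obtain ⟨hNw, hedge⟩ := h3 heq
    refine ⟨hNw, ?_⟩
    intro e heE hie j hje
    rcases eq_or_ne j i with rfl | hji
    · exact hxi
    · have hje' : j ∈ e.erase i := Finset.mem_erase.mpr ⟨hji, hje⟩
      have hpe := hedge e (Finset.mem_filter.mpr ⟨heE, hie⟩)
      by_contra hlt'
      have hlt : ‖x j‖ < t * w j := lt_of_le_of_ne (hxle j) hlt'
      have hposP : 0 < ∏ l ∈ (e.erase i).erase j, (t * w l) :=
        Finset.prod_pos fun l _ => mul_pos ht (hw l)
      have hcontr : (∏ l ∈ e.erase i, ‖x l‖) < ∏ l ∈ e.erase i, (t * w l) := by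
        calc (∏ l ∈ e.erase i, ‖x l‖)
            = ‖x j‖ * ∏ l ∈ (e.erase i).erase j, ‖x l‖ :=
              (Finset.mul_prod_erase _ _ hje').symm
          _ ≤ ‖x j‖ * ∏ l ∈ (e.erase i).erase j, (t * w l) := by
              refine mul_le_mul_of_nonneg_left ?_ (norm_nonneg _)
              exact Finset.prod_le_prod (fun l _ => norm_nonneg _) (fun l _ => hxle l)
          _ < (t * w j) * ∏ l ∈ (e.erase i).erase j, (t * w l) :=
              mul_lt_mul_of_pos_right hlt hposP
          _ = ∏ l ∈ e.erase i, (t * w l) := Finset.mul_prod_erase (e.erase i) (fun l => t * w l) hje'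
      exact absurd hpe hcontr.ne
  -- propagation along connectivity
  have hM : ∀ v, ‖x v‖ = t * w v := by
    intro v
    rcases eq_or_ne v i₀ with rfl | hv
    · exact hxi₀
    · obtain ⟨r, es, hes, hu, hvlast, hinter⟩ := hconn i₀ v (Ne.symm hv)
      have hall : ∀ s : Fin (r+1), ∀ j ∈ es s, ‖x j‖ = t * w j := by
        refine Fin.induction ?_ ?_
        · exact fun j hj => (hstep i₀ hxi₀).2 (es 0) (hes 0) hu j hj
        · intro s ih
          obtain ⟨u, hu'⟩ := hinter s
          obtain ⟨hu1, hu2⟩ := Finset.mem_inter.mp hu'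
          exact fun j hj => (hstep u (ih u hu1)).2 (es s.succ) (hes s.succ) hu2 j hj
      exact hall (Fin.last r) v hvlast
  exact fun i => (hstep i (hM i)).1

end gersh
section eigset
variable (n k : ℕ) (E : Finset (Finset (Fin n)))

def eigSet : Set ℝ :=
  {r : ℝ | ∃ ρ : ℂ, ‖ρ‖ = r ∧ ∃ x : Fin n → ℂ, x ≠ 0 ∧
    ∀ i, (∑ f : Fin (k-1) → Fin n, ((adjT n k E i f : ℝ) : ℂ) * ∏ a, x (f a))
      = ρ * x i ^ (k-1)}

variable {n k E}

lemma eigset_of_reg (hk : 2 ≤ k) (hn : 2 ≤ n) (hcard : ∀ e ∈ E, e.card = k)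
    (hconn : HConn n E) (i₀ : Fin n) (hreg : ∀ i j : Fin n, avg2 n k E i = avg2 n k E j) :
    avg2 n k E i₀ ∈ eigSet n k E := by
  refine ⟨(avg2 n k E i₀ : ℝ), by
    rw [Complex.norm_real, Real.norm_eq_abs, abs_of_pos (avg2_pos hn hconn i₀)], 
    fun j => ((dR n E j : ℝ) : ℂ), ?_, ?_⟩
  · intro h
    have := congrFun h i₀
    simp only [Pi.zero_apply, Complex.ofReal_eq_zero] at this
    exact (dR_pos hn hconn i₀).ne' this
  · intro i
    simp only []
    rw [key_sum hk hcard i (fun j => ((dR n E j : ℝ) : ℂ))]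
    have hre : Nw n E (dR n E) i = avg2 n k E i₀ * (dR n E i) ^ (k-1) := by
      rw [Nw_dR_eq hn hconn i, hreg i i₀]
    have := congrArg (Complex.ofReal) hre
    rw [Nw] at this
    push_cast at this
    exact this

lemma eigset_bddAbove (hk : 2 ≤ k) (hn : 2 ≤ n) (hcard : ∀ e ∈ E, e.card = k)
    (hconn : HConn n E) {B₀ : ℝ}
    (hB₀ : ∀ i, Nw n E (dR n E) i ≤ B₀ * dR n E i ^ (k-1)) :
    ∀ r ∈ eigSet n k E, r ≤ B₀ := by
  rintro r ⟨ρ, rfl, x, hx, heig⟩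
  exact (gersh hk hn hcard hconn (dR_pos hn hconn) hB₀ hx heig).1

lemma eigset_attain (hk : 2 ≤ k) (hn : 2 ≤ n) (hcard : ∀ e ∈ E, e.card = k)
    (hconn : HConn n E) {B₀ : ℝ}
    (hB₀ : ∀ i, Nw n E (dR n E) i ≤ B₀ * dR n E i ^ (k-1))
    (hS : (eigSet n k E).Nonempty) : sSup (eigSet n k E) ∈ eigSet n k E := by
  set K : Set (ℂ × (Fin n → ℂ)) :=
    {p | ‖p.2‖ = 1 ∧ ∀ i, (∑ f : Fin (k-1) → Fin n,
      ((adjT n k E i f : ℝ) : ℂ) * ∏ a, p.2 (f a)) = p.1 * p.2 i ^ (k-1)} with hK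
  have himg : eigSet n k E = (fun p : ℂ × (Fin n → ℂ) => ‖p.1‖) '' K := by
    ext r
    constructor
    · rintro ⟨ρ, rfl, x, hx, heig⟩
      have hnx : (0:ℝ) < ‖x‖ := norm_pos_iff.mpr hx
      set y : Fin n → ℂ := fun j => ((‖x‖⁻¹ : ℝ) : ℂ) * x j with hy
      refine ⟨(ρ, y), ⟨?_, ?_⟩, rfl⟩
      · have : y = (‖x‖⁻¹ : ℝ) • x := funext fun j => (Complex.real_smul).symm
        rw [this, norm_smul, Real.norm_eq_abs, abs_of_pos (inv_pos.mpr hnx),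
          inv_mul_cancel₀ hnx.ne']
      · intro i
        have hprod : ∀ f : Fin (k-1) → Fin n,
            (∏ a, y (f a)) = ((‖x‖⁻¹ : ℝ) : ℂ) ^ (k-1) * ∏ a, x (f a) := by
          intro f
          simp only [hy]
          rw [Finset.prod_mul_distrib, Finset.prod_const, Finset.card_univ,
            Fintype.card_fin]
        calc (∑ f : Fin (k-1) → Fin n, ((adjT n k E i f : ℝ) : ℂ) * ∏ a, y (f a))
            = ((‖x‖⁻¹ : ℝ) : ℂ) ^ (k-1) * ∑ f : Fin (k-1) → Fin n,
                ((adjT n k E i f : ℝ) : ℂ) * ∏ a, x (f a) := by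
              rw [Finset.mul_sum]
              exact Finset.sum_congr rfl fun f _ => by rw [hprod f]; ring
          _ = ((‖x‖⁻¹ : ℝ) : ℂ) ^ (k-1) * (ρ * x i ^ (k-1)) := by rw [heig i]
          _ = ρ * y i ^ (k-1) := by rw [hy]; rw [mul_pow]; ring
    · rintro ⟨⟨ρ, x⟩, ⟨hnorm, heig⟩, rfl⟩
      refine ⟨ρ, rfl, x, ?_, heig⟩
      intro h
      rw [h] at hnorm
      simp at hnorm
  have hKcl : IsClosed K := by
    have h1 : IsClosed {p : ℂ × (Fin n → ℂ) | ‖p.2‖ = 1} :=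
      isClosed_eq (continuous_snd.norm) continuous_const
    have h2 : ∀ i : Fin n, IsClosed {p : ℂ × (Fin n → ℂ) |
        (∑ f : Fin (k-1) → Fin n, ((adjT n k E i f : ℝ) : ℂ) * ∏ a, p.2 (f a))
          = p.1 * p.2 i ^ (k-1)} := by
      intro i
      refine isClosed_eq ?_ ?_
      · exact continuous_finset_sum _ fun f _ => continuous_const.mul
          (continuous_finset_prod _ fun a _ => (continuous_apply (f a)).comp continuous_snd)
      · exact continuous_fst.mul (((continuous_apply i).comp continuous_snd).pow _)
    have : K = {p : ℂ × (Fin n → ℂ) | ‖p.2‖ = 1} ∩ ⋂ i : Fin n, {p : ℂ × (Fin n → ℂ) |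
        (∑ f : Fin (k-1) → Fin n, ((adjT n k E i f : ℝ) : ℂ) * ∏ a, p.2 (f a))
          = p.1 * p.2 i ^ (k-1)} := by
      ext p
      simp only [hK, Set.mem_setOf_eq, Set.mem_inter_iff, Set.mem_iInter]
    rw [this]
    exact h1.inter (isClosed_iInter h2)
  have hKbd : Bornology.IsBounded K := by
    refine isBounded_iff_forall_norm_le.mpr ⟨max B₀ 1, ?_⟩
    rintro ⟨ρ, x⟩ ⟨hnorm, heig⟩
    have hx : x ≠ 0 := by
      intro h; rw [h] at hnorm; simp at hnorm
    have hb := (gersh hk hn hcard hconn (dR_pos hn hconn) hB₀ hx heig).1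
    rw [Prod.norm_def]
    apply max_le_max
    · exact hb
    · exact le_of_eq hnorm
  have hKcomp : IsCompact K := Metric.isCompact_of_isClosed_isBounded hKcl hKbd
  have hScomp : IsCompact (eigSet n k E) := by
    rw [himg]
    exact hKcomp.image (continuous_fst.norm)
  exact hScomp.sSup_mem hS

end eigset
section case2
variable {n k : ℕ} {E : Finset (Finset (Fin n))}

/-- part of row sum from edges avoiding `z` -/
noncomputable def Aj (n : ℕ) (E : Finset (Finset (Fin n))) (z j : Fin n) : ℝ :=
  ∑ e ∈ E.filter (fun e => j ∈ e ∧ z ∉ e), ∏ l ∈ e.erase j, dR n E l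

lemma Aj_nonneg (hn : 2 ≤ n) (hconn : HConn n E) (z j : Fin n) : 0 ≤ Aj n E z j :=
  Finset.sum_nonneg fun e _ => Finset.prod_nonneg fun l _ => (dR_pos hn hconn l).le

lemma Aj_eq_zero (hn : 2 ≤ n) (hconn : HConn n E) {z j : Fin n} (h : Aj n E z j = 0) :
    ∀ e ∈ E, j ∈ e → z ∈ e := by
  intro e he hje
  by_contra hze
  have hmem : e ∈ E.filter (fun e => j ∈ e ∧ z ∉ e) :=
    Finset.mem_filter.mpr ⟨he, hje, hze⟩
  have hpos : 0 < ∏ l ∈ e.erase j, dR n E l :=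
    Finset.prod_pos fun l _ => dR_pos hn hconn l
  have := Finset.single_le_sum
    (f := fun e => ∏ l ∈ e.erase j, dR n E l)
    (fun e _ => Finset.prod_nonneg fun l _ => (dR_pos hn hconn l).le) hmem
  rw [Aj] at h
  linarith

lemma Nw_weight_z (z : Fin n) (c : ℝ) :
    Nw n E (fun i => if i = z then c * dR n E z else dR n E i) z = Nw n E (dR n E) z := by
  refine Finset.sum_congr rfl fun e _ => Finset.prod_congr rfl fun l hl => ?_
  simp only []
  rw [if_neg (Finset.ne_of_mem_erase hl)]

lemma Nw_weight_j (z : Fin n) (c : ℝ) {j : Fin n} (hj : j ≠ z) :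
    Nw n E (fun i => if i = z then c * dR n E z else dR n E i) j
      = c * Nw n E (dR n E) j - (c - 1) * Aj n E z j := by
  have hAj : Aj n E z j = ∑ e ∈ E.filter (fun e => j ∈ e),
      (if z ∉ e then ∏ l ∈ e.erase j, dR n E l else 0) := by
    rw [Aj, ← Finset.filter_filter, Finset.sum_filter]
  have hper : ∀ e ∈ E.filter (fun e => j ∈ e),
      (∏ l ∈ e.erase j, (if l = z then c * dR n E z else dR n E l))
        = (if z ∈ e then c * ∏ l ∈ e.erase j, dR n E l else ∏ l ∈ e.erase j, dR n E l) := by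
    intro e he
    obtain ⟨heE, hje⟩ := Finset.mem_filter.mp he
    by_cases hz : z ∈ e
    · rw [if_pos hz]
      have hz' : z ∈ e.erase j := Finset.mem_erase.mpr ⟨fun h => hj h.symm, hz⟩
      rw [← Finset.mul_prod_erase (e.erase j)
        (fun l => if l = z then c * dR n E z else dR n E l) hz', if_pos rfl]
      rw [← Finset.mul_prod_erase (e.erase j) (dR n E) hz']
      have : (∏ l ∈ (e.erase j).erase z, (if l = z then c * dR n E z else dR n E l))
          = ∏ l ∈ (e.erase j).erase z, dR n E l :=
        Finset.prod_congr rfl fun l hl => if_neg (Finset.ne_of_mem_erase hl)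
      rw [this]; ring
    · rw [if_neg hz]
      refine Finset.prod_congr rfl fun l hl => ?_
      have : l ∈ e := Finset.mem_of_mem_erase hl
      exact if_neg (fun h => hz (by rw [← h]; exact this))
  rw [Nw, Finset.sum_congr rfl hper, hAj, Nw, Finset.mul_sum, Finset.mul_sum,
    ← Finset.sum_sub_distrib]
  refine Finset.sum_congr rfl fun e _ => ?_
  by_cases hz : z ∈ e
  · rw [if_pos hz, if_neg (by simpa using hz)]; ring
  · rw [if_neg hz, if_pos hz]; ring

lemma counting (hk : 2 ≤ k) (hn : 2 ≤ n) (hcard : ∀ e ∈ E, e.card = k)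
    (hconn : HConn n E) (z : Fin n) (hall : ∀ e ∈ E, z ∈ e)
    {m₁ m₂ : ℝ} (hm2 : 0 ≤ m₂)
    (hz : Nw n E (dR n E) z = m₁ * dR n E z ^ (k-1))
    (hj : ∀ j, j ≠ z → Nw n E (dR n E) j = m₂ * dR n E j ^ (k-1)) :
    m₁ ≤ m₂ := by
  have hk1 : k - 1 + 1 = k := by omega
  have hcast : ((k - 1 : ℕ) : ℝ) = (k:ℝ) - 1 := by
    rw [Nat.cast_sub (by omega : 1 ≤ k), Nat.cast_one]
  have hEz : E.filter (fun e => z ∈ e) = E := Finset.filter_true_of_mem hall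
  have hfe : ∀ e ∈ E, (Finset.univ.erase z).filter (fun j => j ∈ e) = e.erase z := by
    intro e he
    ext j
    simp only [Finset.mem_filter, Finset.mem_erase, Finset.mem_univ, true_and, and_comm]
  have hfecard : ∀ e ∈ E, (((e.erase z).card : ℝ)) = (k:ℝ) - 1 := by
    intro e he
    rw [Finset.card_erase_of_mem (hall e he), hcard e he, hcast]
  -- identity A
  have idA : (∑ j ∈ Finset.univ.erase z, dR n E j * Nw n E (dR n E) j)
      = ((k:ℝ)-1) * (dR n E z * Nw n E (dR n E) z) := by
    have step1 : ∀ j, dR n E j * Nw n E (dR n E) j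
        = ∑ e ∈ E, (if j ∈ e then ∏ l ∈ e, dR n E l else 0) := by
      intro j
      rw [Nw, Finset.mul_sum, Finset.sum_filter]
      refine Finset.sum_congr rfl fun e _ => ?_
      by_cases hje : j ∈ e
      · rw [if_pos hje, if_pos hje, Finset.mul_prod_erase e (dR n E) hje]
      · rw [if_neg hje, if_neg hje]
    calc (∑ j ∈ Finset.univ.erase z, dR n E j * Nw n E (dR n E) j)
        = ∑ e ∈ E, ∑ j ∈ Finset.univ.erase z, (if j ∈ e then ∏ l ∈ e, dR n E l else 0) := by
          rw [Finset.sum_congr rfl fun j _ => step1 j, Finset.sum_comm]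
      _ = ∑ e ∈ E, ((k:ℝ)-1) * ∏ l ∈ e, dR n E l := by
          refine Finset.sum_congr rfl fun e he => ?_
          rw [← Finset.sum_filter, hfe e he, Finset.sum_const, nsmul_eq_mul, hfecard e he]
      _ = ((k:ℝ)-1) * (dR n E z * Nw n E (dR n E) z) := by
          rw [← Finset.mul_sum]
          congr 1
          rw [Nw, hEz, Finset.mul_sum]
          exact Finset.sum_congr rfl fun e he =>
            (Finset.mul_prod_erase e (dR n E) (hall e he)).symm
  -- identity B
  have idB : (∑ j ∈ Finset.univ.erase z, dR n E j) = ((k:ℝ)-1) * dR n E z := by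
    have step1 : ∀ j, dR n E j = ∑ e ∈ E, (if j ∈ e then (1:ℝ) else 0) := by
      intro j
      show ((E.filter (fun e => j ∈ e)).card : ℝ) = _
      rw [Finset.card_filter]
      push_cast
      exact Finset.sum_congr rfl fun e _ => by split <;> simp
    calc (∑ j ∈ Finset.univ.erase z, dR n E j)
        = ∑ e ∈ E, ∑ j ∈ Finset.univ.erase z, (if j ∈ e then (1:ℝ) else 0) := by
          rw [Finset.sum_congr rfl fun j _ => step1 j, Finset.sum_comm]
      _ = ∑ e ∈ E, ((k:ℝ)-1) := by
          refine Finset.sum_congr rfl fun e he => ?_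
          rw [← Finset.sum_filter, hfe e he, Finset.sum_const, nsmul_eq_mul, hfecard e he,
            mul_one]
      _ = ((k:ℝ)-1) * dR n E z := by
          rw [Finset.sum_const, nsmul_eq_mul, mul_comm]
          congr 1
          show _ = ((E.filter (fun e => z ∈ e)).card : ℝ)
          rw [hEz]
  -- degrees bounded by degree of z
  have hjz : ∀ j, dR n E j ≤ dR n E z := by
    intro j
    have h1 : (E.filter (fun e => j ∈ e)).card ≤ E.card :=
      Finset.card_le_card (Finset.filter_subset _ _)
    have h2 : (E.filter (fun e => z ∈ e)).card = E.card := by rw [hEz]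
    show ((E.filter (fun e => j ∈ e)).card : ℝ) ≤ ((E.filter (fun e => z ∈ e)).card : ℝ)
    rw [h2]
    exact_mod_cast h1
  have hdznn : ∀ j, 0 ≤ dR n E j := fun j => Nat.cast_nonneg _
  have hpowk : ∀ (r : ℝ), r ^ (k-1) * r = r ^ k := by
    intro r
    rw [← pow_succ, hk1]
  -- final computation
  have lhs_eq : (∑ j ∈ Finset.univ.erase z, dR n E j * Nw n E (dR n E) j)
      = m₂ * ∑ j ∈ Finset.univ.erase z, dR n E j ^ k := by
    rw [Finset.mul_sum]
    refine Finset.sum_congr rfl fun j hj' => ?_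
    rw [hj j (Finset.ne_of_mem_erase hj'), ← hpowk (dR n E j)]; ring
  have sum_le : (∑ j ∈ Finset.univ.erase z, dR n E j ^ k)
      ≤ ((k:ℝ)-1) * dR n E z ^ k := by
    calc (∑ j ∈ Finset.univ.erase z, dR n E j ^ k)
        ≤ ∑ j ∈ Finset.univ.erase z, dR n E z ^ (k-1) * dR n E j := by
          refine Finset.sum_le_sum fun j _ => ?_
          rw [← hpowk (dR n E j)]
          exact mul_le_mul_of_nonneg_right
            (pow_le_pow_left₀ (hdznn j) (hjz j) _) (hdznn j)
      _ = dR n E z ^ (k-1) * (((k:ℝ)-1) * dR n E z) := by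
          rw [← Finset.mul_sum, idB]
      _ = ((k:ℝ)-1) * dR n E z ^ k := by
          rw [← hpowk (dR n E z)]; ring
  have hzpos : 0 < dR n E z := dR_pos hn hconn z
  have hkpos : (0:ℝ) < (k:ℝ) - 1 := by
    have : (2:ℝ) ≤ (k:ℝ) := by exact_mod_cast hk
    linarith
  have final : m₁ * (((k:ℝ)-1) * dR n E z ^ k) ≤ m₂ * (((k:ℝ)-1) * dR n E z ^ k) := by
    calc m₁ * (((k:ℝ)-1) * dR n E z ^ k)
        = ((k:ℝ)-1) * (dR n E z * (m₁ * dR n E z ^ (k-1))) := by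
          rw [← hpowk (dR n E z)]; ring
      _ = ((k:ℝ)-1) * (dR n E z * Nw n E (dR n E) z) := by rw [hz]
      _ = ∑ j ∈ Finset.univ.erase z, dR n E j * Nw n E (dR n E) j := idA.symm
      _ = m₂ * ∑ j ∈ Finset.univ.erase z, dR n E j ^ k := lhs_eq
      _ ≤ m₂ * (((k:ℝ)-1) * dR n E z ^ k) := mul_le_mul_of_nonneg_left sum_le hm2
  exact le_of_mul_le_mul_right final (mul_pos hkpos (pow_pos hzpos _))

end case2
section rpowfacts

lemma rpow_facts {k : ℕ} (hk : 2 ≤ k) {a b : ℝ} (ha : 0 < a) (hb : 0 < b) :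
    0 < a ^ ((1:ℝ)/k) * b ^ (1 - (1:ℝ)/k) ∧
    (a ^ ((1:ℝ)/k) * b ^ (1 - (1:ℝ)/k)) ^ k = a * b ^ (k-1) ∧
    (b < a → b < a ^ ((1:ℝ)/k) * b ^ (1 - (1:ℝ)/k)) ∧
    (a = b → a ^ ((1:ℝ)/k) * b ^ (1 - (1:ℝ)/k) = a) := by
  have hk0 : (k:ℝ) ≠ 0 := by
    have : (0:ℝ) < (k:ℝ) := by exact_mod_cast Nat.lt_of_lt_of_le (by norm_num) hk
    exact this.ne'
  have hcast : ((k - 1 : ℕ) : ℝ) = (k:ℝ) - 1 := by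
    rw [Nat.cast_sub (by omega : 1 ≤ k), Nat.cast_one]
  refine ⟨?_, ?_, ?_, ?_⟩
  · exact mul_pos (Real.rpow_pos_of_pos ha _) (Real.rpow_pos_of_pos hb _)
  · rw [mul_pow, ← Real.rpow_natCast (a ^ ((1:ℝ)/k)) k,
      ← Real.rpow_natCast (b ^ (1 - (1:ℝ)/k)) k,
      ← Real.rpow_mul ha.le, ← Real.rpow_mul hb.le]
    have h1 : (1:ℝ)/k * k = 1 := by field_simp
    have h2 : (1 - (1:ℝ)/k) * k = (k:ℝ) - 1 := by field_simp
    rw [h1, h2, Real.rpow_one]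
    congr 1
    rw [← Real.rpow_natCast b (k-1), hcast]
  · intro hba
    have h1 : b ^ ((1:ℝ)/k) < a ^ ((1:ℝ)/k) :=
      Real.rpow_lt_rpow hb.le hba (by positivity)
    calc b = b ^ ((1:ℝ)/k) * b ^ (1 - (1:ℝ)/k) := by
          rw [← Real.rpow_add hb]
          norm_num
      _ < a ^ ((1:ℝ)/k) * b ^ (1 - (1:ℝ)/k) :=
          mul_lt_mul_of_pos_right h1 (Real.rpow_pos_of_pos hb _)
  · rintro rfl
    rw [← Real.rpow_add ha]
    norm_num

end rpowfacts

/-- Let `G` be a connected `k`-uniform hypergraph on `n` vertices with average 2-degrees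
`m₁ ≥ m₂ ≥ … ≥ m_n`. Then `ρ(G) = m₁^{1/k} m₂^{1-1/k}` if and only if all vertices have the
same average 2-degree; and in that case `ρ(G) = m₁`. -/
theorem stmt4 (n k : ℕ) (hk : 2 ≤ k) (hkn : k ≤ n)
    (E : Finset (Finset (Fin n))) (hcard : ∀ e ∈ E, e.card = k)
    (hconn : HConn n E)
    (hsort : ∀ i j : Fin n, i ≤ j → avg2 n k E j ≤ avg2 n k E i) :
    (specRad n k (adjT n k E) =
        (avg2 n k E ⟨0, by omega⟩) ^ ((1 : ℝ)/k) * (avg2 n k E ⟨1, by omega⟩) ^ (1 - (1 : ℝ)/k)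
      ↔ ∀ i j : Fin n, avg2 n k E i = avg2 n k E j) ∧
    ((∀ i j : Fin n, avg2 n k E i = avg2 n k E j) →
      specRad n k (adjT n k E) = avg2 n k E ⟨0, by omega⟩) := by
  have hn : 2 ≤ n := hk.trans hkn
  set z : Fin n := ⟨0, by omega⟩ with hzdef
  set o : Fin n := ⟨1, by omega⟩ with hodef
  have hspec : specRad n k (adjT n k E) = sSup (eigSet n k E) := rfl
  set a := avg2 n k E z with hadef
  set b := avg2 n k E o with hbdef
  have ha : 0 < a := avg2_pos hn hconn z
  have hb : 0 < b := avg2_pos hn hconn o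
  have hba : b ≤ a := hsort z o (by rw [hzdef, hodef]; exact Fin.mk_le_mk.mpr (by omega))
  have hmax : ∀ i, avg2 n k E i ≤ a := fun i => hsort z i (by simp [hzdef, Fin.le_def])
  have hsnd : ∀ i, i ≠ z → avg2 n k E i ≤ b := by
    intro i hi
    refine hsort o i ?_
    have : i.val ≠ 0 := fun h => hi (Fin.ext h)
    simp only [hodef, Fin.le_def]
    omega
  have hk1 : k - 1 + 1 = k := by omega
  have hpowk : ∀ (r : ℝ), r ^ (k-1) * r = r ^ k := fun r => by rw [← pow_succ, hk1]
  have hB₀ : ∀ i, Nw n E (dR n E) i ≤ a * dR n E i ^ (k-1) := by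
    intro i
    rw [Nw_dR_eq hn hconn i]
    exact mul_le_mul_of_nonneg_right (hmax i) (pow_nonneg (dR_pos hn hconn i).le _)
  -- regular case value of the spectral radius
  have reg_spec : (∀ i j : Fin n, avg2 n k E i = avg2 n k E j) →
      sSup (eigSet n k E) = a := by
    intro hreg
    have hmem := eigset_of_reg hk hn hcard hconn z hreg
    have hbdd := eigset_bddAbove hk hn hcard hconn hB₀
    exact le_antisymm (csSup_le ⟨a, hmem⟩ hbdd)
      (le_csSup ⟨a, fun r hr => hbdd r hr⟩ hmem)
  obtain ⟨hBpos, hBpow, hBgt, hBeq⟩ := rpow_facts hk ha hb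
  set B := a ^ ((1:ℝ)/k) * b ^ (1 - (1:ℝ)/k) with hBdef
  constructor
  · constructor
    · -- forward direction
      intro heq
      rw [hspec] at heq
      have hSne : (eigSet n k E).Nonempty := by
        by_contra h
        rw [Set.not_nonempty_iff_eq_empty] at h
        rw [h, Real.sSup_empty] at heq
        exact absurd heq.symm hBpos.ne'
      have hmem : B ∈ eigSet n k E := by
        rw [← heq]
        exact eigset_attain hk hn hcard hconn hB₀ hSne
      obtain ⟨ρ, hρabs, x, hx, heig⟩ := hmem
      by_cases hab : b = a
      · -- m₁ = m₂ : B = a, use weights d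
        have hBa : B = a := hBeq hab.symm
        have hrig := (gersh hk hn hcard hconn (dR_pos hn hconn) hB₀ hx heig).2
          (by rw [hρabs, hBa])
        intro i j
        have hi' : avg2 n k E i = a := by
          have := hrig i
          rw [Nw_dR_eq hn hconn i] at this
          exact mul_right_cancel₀ (pow_ne_zero _ (dR_pos hn hconn i).ne') this
        have hj' : avg2 n k E j = a := by
          have := hrig j
          rw [Nw_dR_eq hn hconn j] at this
          exact mul_right_cancel₀ (pow_ne_zero _ (dR_pos hn hconn j).ne') this
        rw [hi', hj']
      · -- m₂ < m₁ : contradiction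
        exfalso
        have hba' : b < a := lt_of_le_of_ne hba hab
        set c := B / b with hcdef
        have hc1 : 1 < c := (one_lt_div hb).mpr (hBgt hba')
        have hcb : c * b = B := div_mul_cancel₀ _ hb.ne'
        have hBc : B * c ^ (k-1) = a := by
          have hbk : b ^ (k-1) ≠ 0 := pow_ne_zero _ hb.ne'
          rw [hcdef, div_pow, ← mul_div_assoc, mul_comm B, hpowk B, hBpow]
          field_simp
        set w : Fin n → ℝ := fun i => if i = z then c * dR n E z else dR n E i with hwdef
        have hwpos : ∀ i, 0 < w i := by
          intro i
          simp only [hwdef]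
          split
          · exact mul_pos (lt_trans one_pos hc1) (dR_pos hn hconn z)
          · exact dR_pos hn hconn i
        have hwz : w z = c * dR n E z := by simp [hwdef]
        have hwj : ∀ i, i ≠ z → w i = dR n E i := fun i hi => by simp [hwdef, hi]
        have hBw : ∀ i, Nw n E w i ≤ B * w i ^ (k-1) := by
          intro i
          rcases eq_or_ne i z with rfl | hiz
          · rw [Nw_weight_z, Nw_dR_eq hn hconn z, hwz, mul_pow, ← hadef, ← hBc]
            exact le_of_eq (by ring)
          · rw [Nw_weight_j z c hiz, hwj i hiz]
            have h1 : (c - 1) * Aj n E z i ≥ 0 :=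
              mul_nonneg (by linarith) (Aj_nonneg hn hconn z i)
            have h2 : c * Nw n E (dR n E) i ≤ B * dR n E i ^ (k-1) := by
              rw [Nw_dR_eq hn hconn i, ← hcb]
              have := mul_le_mul_of_nonneg_right (hsnd i hiz)
                (pow_nonneg (dR_pos hn hconn i).le (k-1))
              calc c * (avg2 n k E i * dR n E i ^ (k-1))
                  ≤ c * (b * dR n E i ^ (k-1)) := by
                    refine mul_le_mul_of_nonneg_left this (by linarith)
                _ = c * b * dR n E i ^ (k-1) := by ring
            linarith
        have hrig := (gersh hk hn hcard hconn hwpos hBw hx heig).2 hρabs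
        -- rigidity at each i ≠ z gives avg2 i = b and all edges at i contain z
        have hkey : ∀ i, i ≠ z → avg2 n k E i = b ∧ Aj n E z i = 0 := by
          intro i hiz
          have h1 := hrig i
          rw [Nw_weight_j z c hiz, hwj i hiz, Nw_dR_eq hn hconn i, ← hcb] at h1
          have hAnn := Aj_nonneg hn hconn z i
          have hpp : 0 < dR n E i ^ (k-1) := pow_pos (dR_pos hn hconn i) _
          have h2 : avg2 n k E i ≤ b := hsnd i hiz
          -- c * (avg2 i) * d^ - (c-1) * Aj = c * b * d^
          have h3 : (c - 1) * Aj n E z i = c * (avg2 n k E i - b) * dR n E i ^ (k-1) := by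
            ring_nf
            ring_nf at h1
            linarith
          have h4 : c * (avg2 n k E i - b) * dR n E i ^ (k-1) ≤ 0 := by
            have : c * (avg2 n k E i - b) ≤ 0 :=
              mul_nonpos_iff.mpr (Or.inl ⟨by linarith, by linarith⟩)
            exact mul_nonpos_of_nonpos_of_nonneg this hpp.le
          have h5 : (c - 1) * Aj n E z i = 0 :=
            le_antisymm (h3 ▸ h4) (mul_nonneg (by linarith) hAnn)
          have hA0 : Aj n E z i = 0 := by
            rcases mul_eq_zero.mp h5 with h | h
            · exfalso; linarith
            · exact h
          refine ⟨?_, hA0⟩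
          rw [hA0] at h3
          have h6 : c * (avg2 n k E i - b) * dR n E i ^ (k-1) = 0 := by linarith
          rcases mul_eq_zero.mp h6 with h | h
          · rcases mul_eq_zero.mp h with h' | h'
            · exfalso; linarith
            · linarith
          · exact absurd h hpp.ne'
        -- every edge contains z
        have hall : ∀ e ∈ E, z ∈ e := by
          intro e he
          by_contra hze
          have hecard : e.card = k := hcard e he
          have hene : e.Nonempty := Finset.card_pos.mp (by omega)
          obtain ⟨i, hie⟩ := hene
          have hiz : i ≠ z := fun h => hze (h ▸ hie)
          exact hze (Aj_eq_zero hn hconn (hkey i hiz).2 e he hie)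
        have hfin : a ≤ b := by
          refine counting hk hn hcard hconn z hall hb.le ?_ ?_
          · rw [Nw_dR_eq hn hconn z]
          · intro j hjz
            rw [Nw_dR_eq hn hconn j, (hkey j hjz).1]
        linarith
    · -- reverse direction
      intro hreg
      rw [hspec, reg_spec hreg, hBdef]
      exact (hBeq (hreg z o)).symm
  · intro hreg
    rw [hspec, reg_spec hreg]
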